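/- arXiv:1809.07135 — 6 statements merged into one kernel-verified Lean document; each statement's English description precedes it below -/
import Mathlib

section
/- Let f be analytic on D with f(0)=0, f'(0)=1, and suppose U_f(z) := (z/f(z))^2 f'(z) - 1 is identically zero on D (with z/f(z) extended analytically at 0). Then f(z) = z/(1 - a_2 z) for all z ∈ D, where a_2 = f''(0)/2. -/
open Complex Metric Set Filter Topology

lemma key_ode (h : ℂ → ℂ) (hh : DifferentiableOn ℂ h (ball 0 1))
    (h'0 : deriv h 0 = 0)
    (heq : ∀ z ∈ ball (0:ℂ) 1, z * deriv h z = h z) :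
    ∀ z ∈ ball (0:ℂ) 1, h z = 0 := by
  have hopen : IsOpen (ball (0:ℂ) 1) := isOpen_ball
  have hdiff : ∀ z ∈ ball (0:ℂ) 1, DifferentiableAt ℂ h z := fun z hz =>
    (hh.differentiableAt (hopen.mem_nhds hz))
  intro z hz
  rcases eq_or_ne z 0 with rfl | hz0
  · have := heq 0 (by simpa using hz)
    simpa using this.symm
  -- φ t = h (t z) / t
  set φ : ℝ → ℂ := fun t => h ((t : ℂ) * z) / (t : ℂ) with hφ
  have hball : ∀ t : ℝ, t ∈ Ioc (0:ℝ) 1 → (t : ℂ) * z ∈ ball (0:ℂ) 1 := by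
    intro t ht
    simp only [mem_ball, dist_zero_right, norm_mul, Complex.norm_real] at hz ⊢
    have : |t| ≤ 1 := abs_le.2 ⟨by linarith [ht.1], ht.2⟩
    calc ‖t‖ * ‖z‖ ≤ 1 * ‖z‖ := by
          apply mul_le_mul_of_nonneg_right _ (norm_nonneg _)
          simpa [Real.norm_eq_abs] using this
      _ < 1 := by simpa using hz
  have hder : ∀ t ∈ Ioc (0:ℝ) 1, HasDerivAt φ 0 t := by
    intro t ht
    have htne : (t : ℂ) ≠ 0 := by exact_mod_cast ne_of_gt ht.1
    have hmem := hball t ht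
    have h1 : HasDerivAt (fun w : ℂ => h (w * z)) (deriv h ((t:ℂ) * z) * z) (t : ℂ) := by
      have := ((hdiff _ hmem).hasDerivAt).comp (t : ℂ)
        ((hasDerivAt_id (t:ℂ)).mul_const z)
      rw [one_mul] at this; exact this
    have h2 : HasDerivAt (fun w : ℂ => h (w * z) / w)
        ((deriv h ((t:ℂ)*z) * z * (t:ℂ) - h ((t:ℂ)*z) * 1) / ((t:ℂ))^2) (t : ℂ) :=
      h1.div (hasDerivAt_id _) htne
    have hz' : (t:ℂ) * z * deriv h ((t:ℂ)*z) = h ((t:ℂ)*z) := heq _ hmem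
    have h3 : (deriv h ((t:ℂ)*z) * z * (t:ℂ) - h ((t:ℂ)*z) * 1) / ((t:ℂ))^2 = 0 := by
      rw [div_eq_zero_iff]; left; rw [← hz']; ring
    rw [h3] at h2
    exact h2.comp_ofReal
  -- φ is constant on Ioc 0 1
  have hconst : ∀ t ∈ Ioc (0:ℝ) 1, φ t = φ 1 := by
    intro t ht
    apply (convex_Ioc (0:ℝ) 1).is_const_of_fderivWithin_eq_zero
      (fun s hs => ((hder s hs).differentiableAt.differentiableWithinAt))
      _ ht (by norm_num)
    intro s hs
    have := ((hder s hs).hasFDerivAt.hasFDerivWithinAt).fderivWithin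
      (uniqueDiffOn_Ioc 0 1 s hs)
    rw [this]
    ext v; simp
  -- limit of φ at 0+ is 0
  have hd0 : HasDerivAt h 0 0 := by
    have := (hdiff 0 (by simp)).hasDerivAt
    rwa [h'0] at this
  have hslope : Tendsto (slope h 0) (𝓝[≠] (0:ℂ)) (𝓝 0) :=
    hasDerivAt_iff_tendsto_slope.1 hd0
  have hmap : Tendsto (fun t : ℝ => (t:ℂ) * z) (𝓝[>] (0:ℝ)) (𝓝[≠] (0:ℂ)) := by
    apply tendsto_nhdsWithin_of_tendsto_nhds_of_eventually_within
    · have : Tendsto (fun t : ℝ => (t:ℂ) * z) (𝓝 (0:ℝ)) (𝓝 ((0:ℂ) * z)) :=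
        (Complex.continuous_ofReal.tendsto 0).mul tendsto_const_nhds
      simpa using this.mono_left nhdsWithin_le_nhds
    · filter_upwards [self_mem_nhdsWithin] with t ht
      have : (t:ℂ) ≠ 0 := by exact_mod_cast ne_of_gt ht
      simp [mem_compl_iff, mul_eq_zero, this, hz0]
  have hφ0 : Tendsto φ (𝓝[>] (0:ℝ)) (𝓝 0) := by
    have : Tendsto (fun t : ℝ => z * slope h 0 ((t:ℂ) * z)) (𝓝[>] (0:ℝ)) (𝓝 (z * 0)) :=
      tendsto_const_nhds.mul (hslope.comp hmap)
    rw [mul_zero] at this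
    apply this.congr'
    filter_upwards [self_mem_nhdsWithin] with t ht
    have htne : (t:ℂ) ≠ 0 := by exact_mod_cast ne_of_gt ht
    have hz00 : h 0 = 0 := by
      have := heq 0 (by simp); simpa using this.symm
    simp only [slope_def_field, hz00, sub_zero, hφ]
    field_simp
  -- φ is eventually φ 1 = h z near 0+
  have hev : φ =ᶠ[𝓝[>] (0:ℝ)] fun _ => φ 1 := by
    filter_upwards [Ioc_mem_nhdsGT_of_mem (by norm_num : (0:ℝ) ∈ Ico (0:ℝ) 1)] with t ht
    exact hconst t ht
  have : Tendsto (fun _ : ℝ => φ 1) (𝓝[>] (0:ℝ)) (𝓝 0) := hφ0.congr' hev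
  have hφ1 : φ 1 = 0 := tendsto_nhds_unique tendsto_const_nhds this
  have : φ 1 = h z := by simp [hφ]
  rw [← this, hφ1]

theorem stmt3 (f g : ℂ → ℂ)
    (hf : AnalyticOn ℂ f (ball 0 1))
    (hf0 : f 0 = 0) (hf'0 : deriv f 0 = 1)
    (hfne : ∀ z ∈ ball (0:ℂ) 1, z ≠ 0 → f z ≠ 0)
    (hg : AnalyticOn ℂ g (ball 0 1)) (hg0 : g 0 = 1)
    (hgf : ∀ z ∈ ball (0:ℂ) 1, g z * f z = z)
    (hU : ∀ z ∈ ball (0:ℂ) 1, (g z) ^ 2 * deriv f z - 1 = 0) :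
    ∀ z ∈ ball (0:ℂ) 1, f z = z / (1 - (iteratedDeriv 2 f 0 / 2) * z) := by
  have hopen : IsOpen (ball (0:ℂ) 1) := isOpen_ball
  have h0m : (0:ℂ) ∈ ball (0:ℂ) 1 := by simp
  have hfd : ∀ z ∈ ball (0:ℂ) 1, DifferentiableAt ℂ f z := fun z hz =>
    ((hopen.analyticOn_iff_analyticOnNhd.mp hf) z hz).differentiableAt
  have hgd : ∀ z ∈ ball (0:ℂ) 1, DifferentiableAt ℂ g z := fun z hz =>
    ((hopen.analyticOn_iff_analyticOnNhd.mp hg) z hz).differentiableAt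
  have hU' : ∀ z ∈ ball (0:ℂ) 1, (g z) ^ 2 * deriv f z = 1 := by
    intro z hz; have := hU z hz; linear_combination this
  have hgne : ∀ z ∈ ball (0:ℂ) 1, g z ≠ 0 := by
    intro z hz hg0'
    have := hU' z hz
    rw [hg0'] at this; simp at this
  -- the ODE for g : z g' = g - 1
  have hode : ∀ z ∈ ball (0:ℂ) 1, z * deriv g z = g z - 1 := by
    intro z hz
    have hA : deriv g z * f z + g z * deriv f z = 1 := by
      have hev : (fun w => g w * f w) =ᶠ[𝓝 z] id := by
        filter_upwards [hopen.mem_nhds hz] with w hw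
        exact hgf w hw
      have h1 : deriv (fun w => g w * f w) z = 1 := by
        rw [hev.deriv_eq, deriv_id]
      rwa [deriv_fun_mul (hgd z hz) (hfd z hz)] at h1
    have hB := hU' z hz
    have hC := hgf z hz
    linear_combination (g z) * hA - hB - (deriv g z) * hC
  set c := deriv g 0 with hc
  set h : ℂ → ℂ := fun z => g z - 1 - c * z with hh
  have hhd : ∀ z ∈ ball (0:ℂ) 1, HasDerivAt h (deriv g z - c) z := by
    intro z hz
    have := ((hgd z hz).hasDerivAt.sub_const 1).sub ((hasDerivAt_id z).const_mul c)
    rw [mul_one] at this; exact this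
  have hzero : ∀ z ∈ ball (0:ℂ) 1, h z = 0 := by
    apply key_ode
    · intro z hz
      exact ((hhd z hz).differentiableAt).differentiableWithinAt
    · rw [(hhd 0 h0m).deriv]; ring
    · intro z hz
      rw [(hhd z hz).deriv]
      have := hode z hz
      simp only [hh]
      linear_combination this
  have hgeq : ∀ z ∈ ball (0:ℂ) 1, g z = 1 + c * z := by
    intro z hz
    have := hzero z hz
    simp only [hh] at this
    linear_combination this
  -- compute iteratedDeriv 2 f 0 = -2c
  have hdf : ∀ z ∈ ball (0:ℂ) 1, deriv f z = ((g z) ^ 2)⁻¹ := by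
    intro z hz
    have hB := hU' z hz
    rw [inv_eq_one_div, eq_div_iff (pow_ne_zero 2 (hgne z hz))]
    linear_combination hB
  have hF : HasDerivAt (fun z : ℂ => ((1 + c * z) ^ 2)⁻¹) (-2 * c) 0 := by
    have h1 : HasDerivAt (fun z : ℂ => 1 + c * z) c 0 := by
      simpa using ((hasDerivAt_id (0:ℂ)).const_mul c).const_add 1
    have h2 : HasDerivAt (fun z : ℂ => (1 + c * z) ^ 2) (2 * (1 + c * 0) ^ 1 * c) 0 := h1.pow 2
    have h3 : HasDerivAt (fun z : ℂ => ((1 + c * z) ^ 2)⁻¹) (-(2 * (1 + c * 0) ^ 1 * c) / ((1 + c * 0) ^ 2) ^ 2) 0 := h2.inv (by norm_num)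
    convert h3 using 1
    norm_num
  have hd2 : deriv (deriv f) 0 = -2 * c := by
    have hev : deriv f =ᶠ[𝓝 0] (fun z : ℂ => ((1 + c * z) ^ 2)⁻¹) := by
      filter_upwards [hopen.mem_nhds h0m] with w hw
      rw [hdf w hw, hgeq w hw]
    rw [hev.deriv_eq, hF.deriv]
  have hit : iteratedDeriv 2 f 0 = -2 * c := by
    rw [show (2:ℕ) = 1 + 1 from rfl, iteratedDeriv_succ, iteratedDeriv_one]
    exact hd2
  intro z hz
  have hgz := hgeq z hz
  have hgne' := hgne z hz
  have hfz : f z = z / g z := by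
    rw [eq_div_iff hgne', mul_comm]
    exact hgf z hz
  rw [hfz, hit, hgz]
  congr 1
  ring
end

section
/- Let f be analytic on D with f(0)=0, f'(0)=1, and |U_f(z)| ≤ λ|z|^2 on D for some λ ∈ (0,1). Then for every t ≥ 0 and z ∈ D, z^2 f'(e^{-t}z) e^{-t} - (e^t - e^{-t}) f(e^{-t}z)^2 ≠ 0 whenever z ≠ 0. (Equivalently, the denominator of the Herglotz function of Becker's chain does not vanish in D.) -/
open Complex Metric Set

theorem stmt8 (f g : ℂ → ℂ) (lam : ℝ) (hlam : 0 < lam ∧ lam < 1)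
    (hf : AnalyticOn ℂ f (ball 0 1))
    (hf0 : f 0 = 0) (hf'0 : deriv f 0 = 1)
    (hg : AnalyticOn ℂ g (ball 0 1)) (hg0 : g 0 = 1)
    (hgf : ∀ z ∈ ball (0:ℂ) 1, g z * f z = z)
    (hU : ∀ z ∈ ball (0:ℂ) 1,
      ‖(g z) ^ 2 * deriv f z - 1‖ ≤ lam * ‖z‖ ^ 2) :
    ∀ t : ℝ, 0 ≤ t → ∀ z ∈ ball (0:ℂ) 1, z ≠ 0 →
      z ^ 2 * deriv f ((Real.exp (-t) : ℂ) * z) * (Real.exp (-t) : ℂ) -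
        ((Real.exp t - Real.exp (-t) : ℝ) : ℂ) * (f ((Real.exp (-t) : ℂ) * z)) ^ 2 ≠ 0 := by
  obtain ⟨hl0, hl1⟩ := hlam
  intro t ht z hz hz0 heq
  set e : ℂ := (Real.exp (-t) : ℂ) with he
  have he0 : e ≠ 0 := by
    simp [he, Complex.ofReal_ne_zero, Real.exp_ne_zero]
  set w : ℂ := e * z with hwdef
  have habse : ‖e‖ = Real.exp (-t) := by
    rw [he, Complex.norm_real, Real.norm_eq_abs, abs_of_pos (Real.exp_pos _)]
  have hele : ‖e‖ ≤ 1 := by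
    rw [habse]
    exact Real.exp_le_one_iff.mpr (by linarith)
  have hzlt : ‖z‖ < 1 := by simpa using hz
  have hwball : w ∈ ball (0:ℂ) 1 := by
    simp only [mem_ball, dist_zero_right]
    calc ‖w‖ = ‖e‖ * ‖z‖ := by
          simp [hwdef, map_mul]
      _ ≤ 1 * ‖z‖ :=
          mul_le_mul_of_nonneg_right hele (norm_nonneg _)
      _ < 1 := by simpa using hzlt
  have hgfw := hgf w hwball
  have hfw : f w ≠ 0 := by
    intro h
    rw [h, mul_zero] at hgfw
    rcases mul_eq_zero.mp hgfw.symm with h' | h'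
    · exact he0 h'
    · exact hz0 h'
  have hee : e * (Real.exp t : ℂ) = 1 := by
    rw [he]
    rw [← Complex.ofReal_mul, ← Real.exp_add]
    norm_num
  -- from heq: z^2 * f'(w) * e = (e^t - e^{-t}) * f(w)^2
  have heq' : z ^ 2 * deriv f w * e = ((Real.exp t : ℂ) - e) * (f w) ^ 2 := by
    have h0 := sub_eq_zero.mp heq
    rw [h0]; push_cast [he]; ring
  -- key identity: U(w) = -e^2
  have key : g w ^ 2 * deriv f w - 1 = -e ^ 2 := by
    have hcancel : (g w ^ 2 * deriv f w - 1) * (f w) ^ 2 = (-e ^ 2) * (f w) ^ 2 := by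
      have h1 : g w ^ 2 * deriv f w * (f w) ^ 2 = w ^ 2 * deriv f w := by
        calc g w ^ 2 * deriv f w * (f w) ^ 2 = (g w * f w) ^ 2 * deriv f w := by ring
          _ = w ^ 2 * deriv f w := by rw [hgfw]
      have h2 : w ^ 2 * deriv f w = (1 - e ^ 2) * (f w) ^ 2 := by
        calc w ^ 2 * deriv f w = e * (z ^ 2 * deriv f w * e) := by rw [hwdef]; ring
          _ = e * (((Real.exp t : ℂ) - e) * (f w) ^ 2) := by rw [heq']
          _ = (e * (Real.exp t : ℂ) - e ^ 2) * (f w) ^ 2 := by ring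
          _ = (1 - e ^ 2) * (f w) ^ 2 := by rw [hee]
      calc (g w ^ 2 * deriv f w - 1) * (f w) ^ 2
          = g w ^ 2 * deriv f w * (f w) ^ 2 - (f w) ^ 2 := by ring
        _ = (1 - e ^ 2) * (f w) ^ 2 - (f w) ^ 2 := by rw [h1, h2]
        _ = (-e ^ 2) * (f w) ^ 2 := by ring
    exact mul_right_cancel₀ (pow_ne_zero 2 hfw) hcancel
  have habs : ‖g w ^ 2 * deriv f w - 1‖ = Real.exp (-t) ^ 2 := by
    rw [key]
    rw [norm_neg, norm_pow, habse]
  have hUw := hU w hwball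
  rw [habs] at hUw
  have habsw : ‖w‖ = Real.exp (-t) * ‖z‖ := by
    rw [hwdef, norm_mul, habse]
  rw [habsw] at hUw
  have hexp := Real.exp_pos (-t)
  have hzabs := norm_nonneg z
  have ha : ‖z‖ ^ 2 < 1 := by nlinarith
  have hla : lam * ‖z‖ ^ 2 < 1 := by nlinarith
  have hrw : lam * (Real.exp (-t) * ‖z‖) ^ 2
      = (lam * ‖z‖ ^ 2) * Real.exp (-t) ^ 2 := by ring
  rw [hrw] at hUw
  nlinarith [mul_pos hexp hexp]
end

section
/- Let f be analytic on D with f(0)=0, f'(0)=1, f''(0)=0, and write a_3 = f'''(0)/6. Define f(z,t) = z f(e^{-t}z)/(z - (e^t - e^{-t}) f(e^{-t}z)). Then e^{-t} f(z,t) → z/(1 - a_3 z^2) as t → ∞, locally uniformly in z on a neighborhood of 0, and f(z,0) = f(z), f(0,t) = 0, ∂f/∂z(0,t) = e^t for all t ≥ 0. -/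
open Complex Metric Set Filter

open Topology

theorem stmt9 (f : ℂ → ℂ)
    (hf : AnalyticOn ℂ f (ball 0 1))
    (hf0 : f 0 = 0) (hf'0 : deriv f 0 = 1) (hf''0 : iteratedDeriv 2 f 0 = 0)
    (F : ℂ → ℝ → ℂ)
    (hF : ∀ (z : ℂ) (t : ℝ), F z t =
      z * f ((Real.exp (-t) : ℂ) * z) /
        (z - ((Real.exp t - Real.exp (-t) : ℝ) : ℂ) * f ((Real.exp (-t) : ℂ) * z))) :
    (∀ z ∈ ball (0:ℂ) 1, F z 0 = f z) ∧
    (∀ t : ℝ, F 0 t = 0) ∧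
    (∀ t : ℝ, 0 ≤ t → deriv (fun w : ℂ => F w t) 0 = Real.exp t) ∧
    (∃ s ∈ nhds (0 : ℂ),
      TendstoLocallyUniformlyOn (fun (t : ℝ) (z : ℂ) => (Real.exp (-t) : ℂ) * F z t)
        (fun z : ℂ => z / (1 - (iteratedDeriv 3 f 0 / 6) * z ^ 2)) atTop s) := by
  have h0mem : (0:ℂ) ∈ ball (0:ℂ) 1 := by simp
  have hfa : AnalyticAt ℂ f 0 := (isOpen_ball.analyticOn_iff_analyticOnNhd.mp hf) 0 h0mem
  obtain ⟨p, hp⟩ := hfa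
  set h1 : ℂ → ℂ := dslope f 0 with hh1def
  set h2 : ℂ → ℂ := dslope h1 0 with hh2def
  set h3 : ℂ → ℂ := dslope h2 0 with hh3def
  have hp1 : HasFPowerSeriesAt h1 p.fslope 0 := hp.has_fpower_series_dslope_fslope
  have hp2 : HasFPowerSeriesAt h2 p.fslope.fslope 0 := hp1.has_fpower_series_dslope_fslope
  have hp3 : HasFPowerSeriesAt h3 p.fslope.fslope.fslope 0 := hp2.has_fpower_series_dslope_fslope
  obtain ⟨r0, hpr⟩ := hp
  have hp : HasFPowerSeriesAt f p 0 := ⟨r0, hpr⟩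
  have hcoeff : ∀ n : ℕ, (Nat.factorial n : ℂ) * p.coeff n = iteratedDeriv n f 0 := by
    intro n
    have h := hpr.factorial_smul (1 : ℂ) n
    rw [iteratedDeriv_eq_iteratedFDeriv, ← h, FormalMultilinearSeries.apply_eq_pow_smul_coeff,
      one_pow, one_smul, nsmul_eq_mul]
  have hc1 : h1 0 = 1 := by rw [hh1def, dslope_same, hf'0]
  have hc2 : h2 0 = 0 := by
    have h20 : h2 0 = p.coeff 2 := by
      rw [hh2def, dslope_same, hp1.deriv]
      show FormalMultilinearSeries.coeff _ 1 = _
      rw [FormalMultilinearSeries.coeff_fslope]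
    have h6 := hcoeff 2
    rw [hf''0] at h6
    have h2ne : (Nat.factorial 2 : ℂ) ≠ 0 := by norm_num [Nat.factorial]
    rw [h20]
    exact (mul_eq_zero.mp h6).resolve_left h2ne
  have hc3 : h3 0 = iteratedDeriv 3 f 0 / 6 := by
    have h30 : h3 0 = p.coeff 3 := by
      rw [hh3def, dslope_same, hp2.deriv]
      show FormalMultilinearSeries.coeff _ 1 = _
      rw [FormalMultilinearSeries.coeff_fslope, FormalMultilinearSeries.coeff_fslope]
    have h6 := hcoeff 3
    have hfac : (Nat.factorial 3 : ℂ) = 6 := by norm_num [Nat.factorial]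
    rw [hfac] at h6
    rw [h30, eq_div_iff (by norm_num : (6:ℂ) ≠ 0)]
    linear_combination h6
  -- global identities
  have keyf : ∀ w : ℂ, f w = w * h1 w := by
    intro w
    have h := sub_smul_dslope f 0 w
    rw [← hh1def] at h
    simp only [sub_zero, smul_eq_mul, hf0] at h
    exact h.symm
  have key1 : ∀ w : ℂ, h1 w = 1 + w * w * h3 w := by
    intro w
    have e1 := sub_smul_dslope h1 0 w
    have e2 := sub_smul_dslope h2 0 w
    rw [← hh2def] at e1
    rw [← hh3def] at e2
    simp only [sub_zero, smul_eq_mul, hc1, hc2] at e1 e2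
    linear_combination -e1 - w * e2
  set Φ : ℂ → ℂ → ℂ :=
    fun ε z => z * h1 (ε * z) / (1 - (1 - ε^2) * z^2 * h3 (ε * z)) with hΦdef
  have alg : ∀ ε : ℂ, ε ≠ 0 → ∀ z : ℂ,
      ε * (z * f (ε * z) / (z - (1/ε - ε) * f (ε * z))) = Φ ε z := by
    intro ε hε z
    simp only [hΦdef]
    rcases eq_or_ne z 0 with rfl | hz
    · simp [hf0]
    · rw [keyf (ε * z), key1 (ε * z)]
      have hd : z - (1/ε - ε) * (ε * z * (1 + (ε*z) * (ε*z) * h3 (ε*z))) =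
          (ε^2 * z) * (1 - (1 - ε^2) * z^2 * h3 (ε*z)) := by
        field_simp
        ring
      rw [hd, ← mul_div_assoc]
      have hn : ε * (z * (ε * z * (1 + (ε*z) * (ε*z) * h3 (ε*z)))) =
          (ε^2 * z) * (z * (1 + (ε*z) * (ε*z) * h3 (ε*z))) := by ring
      rw [hn, mul_div_mul_left _ _ (mul_ne_zero (pow_ne_zero 2 hε) hz)]
  have hexp_ne : ∀ t : ℝ, ((Real.exp (-t) : ℝ) : ℂ) ≠ 0 := by
    intro t
    simpa using (Real.exp_pos (-t)).ne'
  have hcast : ∀ t : ℝ, ((Real.exp t - Real.exp (-t) : ℝ) : ℂ)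
      = 1 / ((Real.exp (-t) : ℝ) : ℂ) - ((Real.exp (-t) : ℝ) : ℂ) := by
    intro t
    have h : Real.exp t = (Real.exp (-t))⁻¹ := by rw [← Real.exp_neg, neg_neg]
    push_cast [h]
    rw [one_div]
  have key : ∀ (t : ℝ) (z : ℂ), ((Real.exp (-t) : ℝ) : ℂ) * F z t =
      Φ ((Real.exp (-t) : ℝ) : ℂ) z := by
    intro t z
    rw [hF, hcast]
    exact alg _ (hexp_ne t) z
  refine ⟨?_, ?_, ?_, ?_⟩
  · -- F z 0 = f z
    intro z hz
    rw [hF]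
    simp only [neg_zero, Real.exp_zero, ofReal_one, one_mul, sub_self, ofReal_zero,
      zero_mul, sub_zero]
    rcases eq_or_ne z 0 with rfl | hz0
    · simp [hf0]
    · rw [mul_div_cancel_left₀ _ hz0]
  · -- F 0 t = 0
    intro t
    rw [hF]
    simp
  · -- deriv
    intro t ht
    set ε : ℂ := ((Real.exp (-t) : ℝ) : ℂ) with hεdef
    have hε : ε ≠ 0 := hexp_ne t
    have hFeq : (fun w : ℂ => F w t) = fun w : ℂ => ε⁻¹ * Φ ε w := by
      funext w
      rw [← key t w, inv_mul_cancel_left₀ hε]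
    rw [hFeq]
    have hh1d : HasDerivAt h1 (deriv h1 0) (ε * 0) := by
      rw [mul_zero]
      exact hp1.differentiableAt.hasDerivAt
    have hh3d : HasDerivAt h3 (deriv h3 0) (ε * 0) := by
      rw [mul_zero]
      exact hp3.differentiableAt.hasDerivAt
    have hlin : HasDerivAt (fun w : ℂ => ε * w) ε 0 := by
      simpa using (hasDerivAt_id (0:ℂ)).const_mul ε
    have hcomp1 : HasDerivAt (fun w : ℂ => h1 (ε * w)) (deriv h1 0 * ε) 0 := by
      exact hh1d.comp 0 hlin
    have hcomp3 : HasDerivAt (fun w : ℂ => h3 (ε * w)) (deriv h3 0 * ε) 0 := by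
      exact hh3d.comp 0 hlin
    have hN : HasDerivAt (fun w : ℂ => w * h1 (ε * w))
        (1 * h1 (ε * 0) + 0 * (deriv h1 0 * ε)) 0 := (hasDerivAt_id 0).mul hcomp1
    have hpow : HasDerivAt (fun w : ℂ => (1 - ε^2) * w^2)
        ((1 - ε^2) * ((2:ℕ) * 0 ^ 1)) 0 := (hasDerivAt_pow 2 (0:ℂ)).const_mul _
    have hmul : HasDerivAt (fun w : ℂ => (1 - ε^2) * w^2 * h3 (ε * w))
        ((1 - ε^2) * ((2:ℕ) * 0 ^ 1) * h3 (ε * 0) + (1 - ε^2) * 0^2 * (deriv h3 0 * ε)) 0 :=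
      hpow.mul hcomp3
    have hD : HasDerivAt (fun w : ℂ => 1 - (1 - ε^2) * w^2 * h3 (ε * w))
        (-((1 - ε^2) * ((2:ℕ) * 0 ^ 1) * h3 (ε * 0) + (1 - ε^2) * 0^2 * (deriv h3 0 * ε))) 0 :=
      hmul.const_sub 1
    have hDne : (1 : ℂ) - (1 - ε^2) * (0:ℂ)^2 * h3 (ε * 0) ≠ 0 := by
      simp
    have hQ := (hN.div hD hDne).const_mul ε⁻¹
    rw [show deriv (fun w : ℂ => ε⁻¹ * Φ ε w) 0 = _ from hQ.deriv]
    have hinv : ε⁻¹ = ((Real.exp t : ℝ) : ℂ) := by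
      rw [hεdef, Real.exp_neg, ofReal_inv, inv_inv]
    simp [hc1, hinv]
  · -- the limit
    have hball1 : ∀ᶠ w in 𝓝 (0:ℂ), AnalyticAt ℂ h1 w := hp1.analyticAt.eventually_analyticAt
    have hball3 : ∀ᶠ w in 𝓝 (0:ℂ), AnalyticAt ℂ h3 w := hp3.analyticAt.eventually_analyticAt
    set M : ℝ := ‖h3 0‖ + 1 with hM
    have hM1 : 1 ≤ M := le_add_of_nonneg_left (norm_nonneg _)
    have hbound : ∀ᶠ w in 𝓝 (0:ℂ), ‖h3 w‖ < M := by
      have hcont : Tendsto (fun w => ‖h3 w‖) (𝓝 0) (𝓝 ‖h3 0‖) :=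
        (hp3.analyticAt.continuousAt.norm).tendsto
      exact hcont.eventually_lt_const (by rw [hM]; linarith)
    obtain ⟨ρ, hρpos, hρ⟩ :=
      Metric.eventually_nhds_iff_ball.mp ((hball1.and hball3).and hbound)
    set r : ℝ := min (ρ/2) (1/(2*M)) with hr
    have hrpos : 0 < r := lt_min (by linarith) (by positivity)
    have hrρ : r ≤ ρ/2 := min_le_left _ _
    have hrM : r ≤ 1/(2*M) := min_le_right _ _
    refine ⟨ball 0 r, ball_mem_nhds _ hrpos, ?_⟩
    have hfun : (fun (t:ℝ) (z:ℂ) => ((Real.exp (-t) : ℝ):ℂ) * F z t)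
        = fun (t:ℝ) (z:ℂ) => Φ ((Real.exp (-t) : ℝ):ℂ) z := by
      funext t z
      exact key t z
    have hlim : (fun z : ℂ => z / (1 - (iteratedDeriv 3 f 0 / 6) * z ^ 2)) = Φ 0 := by
      funext z
      have hΦ0 : Φ 0 z = z * h1 0 / (1 - (1 - (0:ℂ)^2) * z^2 * h3 0) := by
        simp only [hΦdef, zero_mul]
      rw [hΦ0, hc1, hc3, mul_one]
      congr 1
      ring
    rw [hfun, hlim]
    have hKc : IsCompact (closedBall (0:ℂ) 1 ×ˢ closedBall (0:ℂ) r) :=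
      (isCompact_closedBall _ _).prod (isCompact_closedBall _ _)
    have hsub : MapsTo (fun q : ℂ × ℂ => q.1 * q.2)
        (closedBall (0:ℂ) 1 ×ˢ closedBall (0:ℂ) r) (ball (0:ℂ) ρ) := by
      rintro ⟨a, b⟩ ⟨ha, hb⟩
      simp only [mem_closedBall, dist_zero_right] at ha hb
      simp only [mem_ball, dist_zero_right]
      calc ‖a * b‖ ≤ 1 * r := by
            rw [norm_mul]
            exact mul_le_mul ha hb (norm_nonneg _) zero_le_one
        _ < ρ := by rw [one_mul]; linarith
    have hcont1 : ContinuousOn h1 (ball (0:ℂ) ρ) :=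
      fun w hw => ((hρ w hw).1.1.continuousAt).continuousWithinAt
    have hcont3 : ContinuousOn h3 (ball (0:ℂ) ρ) :=
      fun w hw => ((hρ w hw).1.2.continuousAt).continuousWithinAt
    have hcontmul : ContinuousOn (fun q : ℂ × ℂ => q.1 * q.2)
        (closedBall (0:ℂ) 1 ×ˢ closedBall (0:ℂ) r) :=
      (continuous_fst.mul continuous_snd).continuousOn
    have hden_ne : ∀ q : ℂ × ℂ, q ∈ closedBall (0:ℂ) 1 ×ˢ closedBall (0:ℂ) r →
        1 - (1 - q.1^2) * q.2^2 * h3 (q.1 * q.2) ≠ 0 := by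
      rintro ⟨a, b⟩ hq
      have hmem := hsub hq
      have hh3 : ‖h3 (a*b)‖ < M := (hρ _ hmem).2
      obtain ⟨ha, hb⟩ := hq
      simp only [mem_closedBall, dist_zero_right] at ha hb
      intro hcontra
      have h1eq : (1 - a^2) * b^2 * h3 (a*b) = 1 := by linear_combination -hcontra
      have heq1 : (1:ℝ) = ‖(1 - a^2) * b^2 * h3 (a*b)‖ := by rw [h1eq]; simp
      have h1a : ‖1 - a^2‖ ≤ 2 := by
        calc ‖1 - a^2‖ ≤ ‖(1:ℂ)‖ + ‖a^2‖ := norm_sub_le _ _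
          _ ≤ 1 + 1 := by
              rw [norm_one, norm_pow]
              have : ‖a‖^2 ≤ 1 := pow_le_one₀ (norm_nonneg _) ha
              linarith
          _ = 2 := by norm_num
      have h2b : ‖b^2‖ ≤ r^2 := by
        rw [norm_pow]
        exact pow_le_pow_left₀ (norm_nonneg _) hb 2
      have hub : ‖(1 - a^2) * b^2 * h3 (a*b)‖ ≤ 2 * r^2 * M := by
        rw [norm_mul, norm_mul]
        exact mul_le_mul (mul_le_mul h1a h2b (norm_nonneg _) (by norm_num))
          hh3.le (norm_nonneg _) (by positivity)
      have h2M : (0:ℝ) < 2 * M := by linarith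
      have hr1 : r * (2*M) ≤ 1 := (le_div_iff₀ h2M).mp hrM
      have hrhalf : r ≤ 1/2 := by nlinarith
      have haux : r * (r * (2*M)) ≤ r * 1 := mul_le_mul_of_nonneg_left hr1 hrpos.le
      have hsmall : 2 * r^2 * M < 1 := by nlinarith
      linarith [hub, hsmall, heq1]
    have hcontΦ : ContinuousOn (↿Φ)
        (closedBall (0:ℂ) 1 ×ˢ closedBall (0:ℂ) r) := by
      show ContinuousOn (fun q : ℂ × ℂ =>
        q.2 * h1 (q.1 * q.2) / (1 - (1 - q.1^2) * q.2^2 * h3 (q.1 * q.2)))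
        (closedBall (0:ℂ) 1 ×ˢ closedBall (0:ℂ) r)
      apply ContinuousOn.div
      · exact (continuous_snd.continuousOn).mul (hcont1.comp hcontmul hsub)
      · exact continuousOn_const.sub
          (((continuousOn_const.sub ((continuous_fst.pow 2).continuousOn)).mul
            ((continuous_snd.pow 2).continuousOn)).mul (hcont3.comp hcontmul hsub))
      · exact hden_ne
    have hUC := hKc.uniformContinuousOn_of_continuous hcontΦ
    have hTU : TendstoUniformlyOn Φ (Φ 0) (𝓝[closedBall (0:ℂ) 1] 0)
        (closedBall (0:ℂ) r) :=
      hUC.tendstoUniformlyOn (mem_closedBall_self zero_le_one)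
    have htend : Tendsto (fun t : ℝ => ((Real.exp (-t) : ℝ):ℂ)) atTop
        (𝓝[closedBall (0:ℂ) 1] 0) := by
      rw [tendsto_nhdsWithin_iff]
      constructor
      · have h0 : Tendsto (fun t : ℝ => Real.exp (-t)) atTop (𝓝 0) :=
          Real.tendsto_exp_neg_atTop_nhds_zero
        have h1' : Tendsto (fun t : ℝ => ((Real.exp (-t) : ℝ) : ℂ)) atTop (𝓝 ((0:ℝ):ℂ)) :=
          (Complex.continuous_ofReal.tendsto 0).comp h0
        simpa using h1'
      · filter_upwards [eventually_ge_atTop (0:ℝ)] with t ht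
        simp only [mem_closedBall, dist_zero_right, Complex.norm_real, Real.norm_eq_abs,
          abs_of_pos (Real.exp_pos _)]
        exact Real.exp_le_one_iff.mpr (by linarith)
    have hfinal : TendstoUniformlyOn (fun (t:ℝ) (z:ℂ) => Φ ((Real.exp (-t) : ℝ):ℂ) z)
        (Φ 0) atTop (closedBall (0:ℂ) r) :=
      fun u hu => htend.eventually (hTU u hu)
    exact (hfinal.mono ball_subset_closedBall).tendstoLocallyUniformlyOn
end

section
/- Let g be analytic on D* = {ζ : |ζ| > 1} with expansion g(ζ) = ζ + b_0 + b_1 ζ^{-1} + ⋯ (i.e., g(ζ) - ζ is bounded and analytic on D*, tending to b_0 at ∞), and suppose |U_g(ζ)| ≤ k for all ζ ∈ D*, where k ∈ (0,1) and U_g(ζ) = (ζ/g(ζ))^2 g'(ζ) - 1. Then g(ζ) ≠ 0 for all ζ ∈ D* and, setting f(z) = 1/g(1/z) for z ∈ D \ {0} and f(0)=0, f is analytic on D with f(0)=0, f'(0)=1, and f'(z) - 1 = U_g(1/z) for all z ∈ D \ {0}; in particular |f'(z) - 1| ≤ k on D. -/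
open Complex Metric Set

theorem stmt10 (g h : ℂ → ℂ) (b0 : ℂ) (k : ℝ) (hk : 0 < k ∧ k < 1)
    (hg : AnalyticOn ℂ g {ζ : ℂ | 1 < ‖ζ‖})
    (hh : AnalyticOn ℂ h (ball 0 1)) (hh0 : h 0 = b0)
    (hexp : ∀ ζ : ℂ, 1 < ‖ζ‖ → g ζ = ζ + h (1 / ζ))
    (hU : ∀ ζ : ℂ, 1 < ‖ζ‖ →
      ‖(ζ / g ζ) ^ 2 * deriv g ζ - 1‖ ≤ k)
    (f : ℂ → ℂ)
    (hfdef : ∀ z : ℂ, f z = if z = 0 then 0 else 1 / g (1 / z)) :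
    (∀ ζ : ℂ, 1 < ‖ζ‖ → g ζ ≠ 0) ∧
    AnalyticOn ℂ f (ball 0 1) ∧
    f 0 = 0 ∧ deriv f 0 = 1 ∧
    (∀ z ∈ ball (0:ℂ) 1, z ≠ 0 →
      deriv f z - 1 = ((1 / z) / g (1 / z)) ^ 2 * deriv g (1 / z) - 1) ∧
    (∀ z ∈ ball (0:ℂ) 1, ‖deriv f z - 1‖ ≤ k) := by
  obtain ⟨hk0, hk1⟩ := hk
  -- Part 1: nonvanishing of g on D*
  have hgne : ∀ ζ : ℂ, 1 < ‖ζ‖ → g ζ ≠ 0 := by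
    intro ζ hζ hz
    have h1 := hU ζ hζ
    rw [hz] at h1
    simp [div_zero] at h1
    linarith
  -- basic facts about points of the punctured ball
  have hball : ∀ z : ℂ, z ∈ ball (0:ℂ) 1 → z ≠ 0 → 1 < ‖z⁻¹‖ := by
    intro z hz hz0
    have habs : ‖z‖ < 1 := by simpa using hz
    have habs0 : 0 < ‖z‖ := by simpa using hz0
    rw [norm_inv]
    exact (one_lt_inv₀ habs0).mpr habs
  -- denominator nonvanishing
  have hden : ∀ z ∈ ball (0:ℂ) 1, 1 + z * h z ≠ 0 := by
    intro z hz
    by_cases hz0 : z = 0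
    · simp [hz0]
    · have h1 := hball z hz hz0
      have hgnz := hgne z⁻¹ h1
      have hge := hexp z⁻¹ h1
      rw [one_div, inv_inv] at hge
      intro hcon
      apply hgnz
      rw [hge]
      field_simp at hcon ⊢
      linear_combination hcon
  -- f agrees with F z = z * (1 + z * h z)⁻¹ on the ball
  set F : ℂ → ℂ := fun z => z * (1 + z * h z)⁻¹ with hF
  have hfF : ∀ z ∈ ball (0:ℂ) 1, f z = F z := by
    intro z hz
    by_cases hz0 : z = 0
    · simp [hfdef, hz0, hF]
    · have h1 := hball z hz hz0
      have hgnz := hgne z⁻¹ h1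
      have hge := hexp z⁻¹ h1
      rw [one_div, inv_inv] at hge
      rw [hfdef z, if_neg hz0, one_div, one_div, hge]
      have hd := hden z hz
      simp only [hF]
      rw [show z⁻¹ + h z = (1 + z * h z) / z by field_simp, inv_div,
        div_eq_mul_inv]
  -- analyticity
  have hh' : AnalyticOnNhd ℂ h (ball 0 1) := (isOpen_ball.analyticOn_iff_analyticOnNhd).mp hh
  have hFa : AnalyticOnNhd ℂ F (ball 0 1) := by
    exact analyticOnNhd_id.mul ((analyticOnNhd_const.add
      (analyticOnNhd_id.mul hh')).inv hden)
  have hfa : AnalyticOnNhd ℂ f (ball 0 1) := by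
    intro z hz
    exact (hFa z hz).congr (Filter.eventuallyEq_of_mem
      (isOpen_ball.mem_nhds hz) (fun w hw => (hfF w hw).symm))
  -- derivative at 0
  have hb0 : (0:ℂ) ∈ ball (0:ℂ) 1 := by simp
  have hhd : DifferentiableAt ℂ h 0 := (hh' 0 hb0).differentiableAt
  have hd1 : HasDerivAt (fun z : ℂ => 1 + z * h z) (h 0) 0 := by
    have := (hasDerivAt_id (0:ℂ)).mul hhd.hasDerivAt
    exact ((hasDerivAt_const (0:ℂ) (1:ℂ)).add this).congr_deriv (by simp)
  have hd2 : HasDerivAt (fun z : ℂ => (1 + z * h z)⁻¹) (-(h 0)) 0 := by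
    have := hd1.inv (by simp)
    exact this.congr_deriv (by simp)
  have hdF : HasDerivAt F 1 0 := by
    have := (hasDerivAt_id (0:ℂ)).mul hd2
    exact this.congr_deriv (by simp)
  have hdf0 : HasDerivAt f 1 0 := by
    apply hdF.congr_of_eventuallyEq
    exact Filter.eventuallyEq_of_mem (isOpen_ball.mem_nhds hb0)
      (fun w hw => hfF w hw)
  -- part 4: derivative formula at z ≠ 0
  have hopen : IsOpen {ζ : ℂ | 1 < ‖ζ‖} :=
    isOpen_lt continuous_const continuous_norm
  have hg' : AnalyticOnNhd ℂ g {ζ : ℂ | 1 < ‖ζ‖} :=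
    (hopen.analyticOn_iff_analyticOnNhd).mp hg
  have hP4 : ∀ z ∈ ball (0:ℂ) 1, z ≠ 0 →
      deriv f z - 1 = ((1 / z) / g (1 / z)) ^ 2 * deriv g (1 / z) - 1 := by
    intro z hz hz0
    have h1 := hball z hz hz0
    have hgnz := hgne z⁻¹ h1
    have hgd : HasDerivAt g (deriv g z⁻¹) z⁻¹ :=
      ((hg' z⁻¹ h1).differentiableAt).hasDerivAt
    have hinv : HasDerivAt (fun w : ℂ => w⁻¹) (-(z ^ 2)⁻¹) z :=
      hasDerivAt_inv hz0
    have hcomp : HasDerivAt (fun w : ℂ => g w⁻¹)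
        (deriv g z⁻¹ * -(z ^ 2)⁻¹) z := hgd.comp z hinv
    have hrec : HasDerivAt (fun w : ℂ => (g w⁻¹)⁻¹)
        (-(deriv g z⁻¹ * -(z ^ 2)⁻¹) / (g z⁻¹) ^ 2) z := hcomp.inv hgnz
    have hdf : HasDerivAt f (-(deriv g z⁻¹ * -(z ^ 2)⁻¹) / (g z⁻¹) ^ 2) z := by
      apply hrec.congr_of_eventuallyEq
      refine Filter.eventuallyEq_of_mem
        ((isOpen_compl_singleton (x := (0:ℂ))).mem_nhds hz0) (fun w hw => ?_)
      have hw' : w ≠ 0 := hw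
      rw [hfdef w, if_neg hw', one_div, one_div]
    rw [hdf.deriv, one_div]
    have hz2 : z ^ 2 ≠ 0 := pow_ne_zero 2 hz0
    congr 1
    field_simp
  refine ⟨hgne, hfa.analyticOn, by simp [hfdef], hdf0.deriv, hP4, ?_⟩
  intro z hz
  by_cases hz0 : z = 0
  · rw [hz0, hdf0.deriv]
    simpa using hk0.le
  · rw [hP4 z hz hz0]
    have h1 := hball z hz hz0
    have := hU z⁻¹ (by simpa using h1)
    simpa [one_div] using this
end

section
/- Let f be analytic on D with f(0)=0 and |f'(z)+1| ≤ k on D for some k ∈ (0,1). Define f(z,t) = f(e^{-t}z) - z(e^t - e^{-t}) for z ∈ D, t ≥ 0, and p(z,t) = (∂f/∂t)(z,t)/(z (∂f/∂z)(z,t)). Then for all z ∈ D \ {0} and t ≥ 0: (i) the denominator z·∂f/∂z(z,t) = z(f'(e^{-t}z)e^{-t} - (e^t - e^{-t})) is nonzero; (ii) |(p(z,t)-1)/(p(z,t)+1)| = e^{-2t}|f'(e^{-t}z)+1| ≤ k < 1; (iii) hence Re p(z,t) > 0. -/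
open Complex Metric Set

theorem stmt13 (f : ℂ → ℂ) (k : ℝ) (hk : 0 < k ∧ k < 1)
    (hf : AnalyticOn ℂ f (ball 0 1)) (hf0 : f 0 = 0)
    (hf' : ∀ z ∈ ball (0:ℂ) 1, ‖deriv f z + 1‖ ≤ k)
    (F : ℂ → ℝ → ℂ)
    (hF : ∀ (z : ℂ) (t : ℝ), F z t =
      f ((Real.exp (-t) : ℂ) * z) - z * ((Real.exp t - Real.exp (-t) : ℝ) : ℂ))
    (P : ℂ → ℝ → ℂ)
    (hP : ∀ (z : ℂ) (t : ℝ), P z t =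
      deriv (fun s : ℝ => F z s) t / (z * deriv (fun w : ℂ => F w t) z)) :
    ∀ z ∈ ball (0:ℂ) 1, z ≠ 0 → ∀ t : ℝ, 0 ≤ t →
      z * (deriv f ((Real.exp (-t) : ℂ) * z) * (Real.exp (-t) : ℂ) -
        ((Real.exp t - Real.exp (-t) : ℝ) : ℂ)) ≠ 0 ∧
      ‖(P z t - 1) / (P z t + 1)‖ =
        Real.exp (-(2 * t)) * ‖deriv f ((Real.exp (-t) : ℂ) * z) + 1‖ ∧
      ‖(P z t - 1) / (P z t + 1)‖ ≤ k ∧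
      0 < (P z t).re := by
  obtain ⟨hk0, hk1⟩ := hk
  have hfN : AnalyticOnNhd ℂ f (ball 0 1) :=
    isOpen_ball.analyticOn_iff_analyticOnNhd.mp hf
  intro z hz hz0 t ht
  set c : ℂ := ((Real.exp (-t) : ℝ) : ℂ) with hcdef
  set et : ℂ := ((Real.exp t : ℝ) : ℂ) with hetdef
  have hcet : et * c = 1 := by
    rw [hcdef, hetdef, ← Complex.ofReal_mul, ← Real.exp_add]
    simp
  have hc0 : c ≠ 0 := by
    rw [hcdef]; exact_mod_cast Complex.ofReal_ne_zero.mpr (Real.exp_ne_zero _)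
  have het0 : et ≠ 0 := by
    rw [hetdef]; exact_mod_cast Complex.ofReal_ne_zero.mpr (Real.exp_ne_zero _)
  have hb : ((Real.exp t - Real.exp (-t) : ℝ) : ℂ) = et - c := by
    push_cast [hcdef, hetdef]; ring
  -- the point e^{-t} z is in the ball
  have hw : c * z ∈ ball (0:ℂ) 1 := by
    rw [mem_ball_zero_iff] at hz ⊢
    have h1 : ‖c * z‖ = Real.exp (-t) * ‖z‖ := by
      rw [norm_mul, hcdef, Complex.norm_real, Real.norm_eq_abs,
        abs_of_pos (Real.exp_pos _)]
    have h2 : Real.exp (-t) ≤ 1 := Real.exp_le_one_iff.mpr (by linarith)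
    nlinarith [norm_nonneg z]
  set a : ℂ := deriv f (c * z) with hadef
  have hfd : DifferentiableAt ℂ f (c * z) := (hfN _ hw).differentiableAt
  have ha : HasDerivAt f a (c * z) := hfd.hasDerivAt
  have hak : ‖a + 1‖ ≤ k := hf' _ hw
  -- (i) denominator nonzero
  have hd : a * c - (et - c) ≠ 0 := by
    intro h
    rw [sub_eq_zero] at h
    have key : a + 1 = et * et := by linear_combination et * h - (a + 1) * hcet
    have h1 : ‖a + 1‖ = Real.exp t * Real.exp t := by
      rw [key, norm_mul, hetdef, Complex.norm_real, Real.norm_eq_abs, abs_of_pos (Real.exp_pos _)]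
    have h2 : (1:ℝ) ≤ Real.exp t := Real.one_le_exp (by linarith)
    nlinarith
  -- derivative in t
  have e1 : HasDerivAt (fun s : ℝ => Real.exp (-s)) (-Real.exp (-t)) t := by
    exact ((Real.hasDerivAt_exp (-t)).comp t (hasDerivAt_neg t)).congr_deriv (by simp)
  have e2 : HasDerivAt (fun s : ℝ => ((Real.exp (-s) : ℝ) : ℂ) * z)
      (((-Real.exp (-t) : ℝ) : ℂ) * z) t := e1.ofReal_comp.mul_const z
  have e3 : HasDerivAt (fun s : ℝ => f (((Real.exp (-s) : ℝ) : ℂ) * z))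
      ((((-Real.exp (-t) : ℝ) : ℂ) * z) • a) t := by
    exact HasDerivAt.scomp t (by exact ha) e2
  have e4 : HasDerivAt (fun s : ℝ => Real.exp s - Real.exp (-s))
      (Real.exp t + Real.exp (-t)) t := by
    exact ((Real.hasDerivAt_exp t).sub e1).congr_deriv (by ring)
  have e5 : HasDerivAt (fun s : ℝ => z * ((Real.exp s - Real.exp (-s) : ℝ) : ℂ))
      (z * ((Real.exp t + Real.exp (-t) : ℝ) : ℂ)) t := e4.ofReal_comp.const_mul z
  have hfun1 : (fun s : ℝ => F z s) =
      fun s => f (((Real.exp (-s) : ℝ) : ℂ) * z) - z * ((Real.exp s - Real.exp (-s) : ℝ) : ℂ) :=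
    funext fun s => hF z s
  have hDt : deriv (fun s : ℝ => F z s) t = -(c * z * a) - z * (et + c) := by
    have e6 : HasDerivAt (fun s : ℝ => f (((Real.exp (-s) : ℝ) : ℂ) * z) -
        z * ((Real.exp s - Real.exp (-s) : ℝ) : ℂ)) _ t := e3.sub e5
    rw [hfun1, e6.deriv]
    simp only [smul_eq_mul]
    push_cast [hcdef, hetdef]
    ring
  -- derivative in z
  have g1 : HasDerivAt (fun w : ℂ => c * w) c z := by
    simpa using (hasDerivAt_id z).const_mul c
  have g2 : HasDerivAt (fun w : ℂ => f (c * w)) (a * c) z := by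
    exact HasDerivAt.comp z (by exact ha) g1
  have g3 : HasDerivAt (fun w : ℂ => w * ((Real.exp t - Real.exp (-t) : ℝ) : ℂ))
      ((Real.exp t - Real.exp (-t) : ℝ) : ℂ) z := hasDerivAt_mul_const _
  have hfun2 : (fun w : ℂ => F w t) =
      fun w => f (c * w) - w * ((Real.exp t - Real.exp (-t) : ℝ) : ℂ) :=
    funext fun w => hF w t
  have hDz : deriv (fun w : ℂ => F w t) z = a * c - (et - c) := by
    have g4 : HasDerivAt (fun w : ℂ => f (c * w) - w * ((Real.exp t - Real.exp (-t) : ℝ) : ℂ))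
        _ z := g2.sub g3
    rw [hfun2, g4.deriv, hb]
  -- formula for P
  set N : ℂ := -(c * z * a) - z * (et + c) with hNdef
  set D : ℂ := z * (a * c - (et - c)) with hDdef
  have hD0 : D ≠ 0 := mul_ne_zero hz0 hd
  have hPeq : P z t = N / D := by rw [hP, hDt, hDz]
  have hND : N + D = -(2 * z * et) := by rw [hNdef, hDdef]; ring
  have hNm : N - D = -(2 * c * z * (a + 1)) := by rw [hNdef, hDdef]; ring
  have hND0 : N + D ≠ 0 := by
    rw [hND]
    simp only [neg_ne_zero]
    exact mul_ne_zero (mul_ne_zero two_ne_zero hz0) het0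
  have hP1ne : P z t + 1 ≠ 0 := by
    rw [hPeq, div_add_one hD0]
    exact div_ne_zero hND0 hD0
  have hratio : (P z t - 1) / (P z t + 1) = c * c * (a + 1) := by
    rw [hPeq, div_sub_one hD0, div_add_one hD0, div_div_div_cancel_right₀ hD0,
      hND, hNm,
      show -(2 * c * z * (a + 1)) = c * c * (a + 1) * -(2 * z * et) by
        linear_combination (2 * c * z * (a + 1)) * hcet]
    exact mul_div_cancel_right₀ _ (by rw [← hND]; exact hND0)
  have habs : ‖(P z t - 1) / (P z t + 1)‖ =
      Real.exp (-(2 * t)) * ‖a + 1‖ := by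
    rw [hratio, norm_mul, norm_mul, hcdef, Complex.norm_real, Real.norm_eq_abs,
      abs_of_pos (Real.exp_pos _), ← Real.exp_add]
    ring_nf
  have hexp1 : Real.exp (-(2 * t)) ≤ 1 := Real.exp_le_one_iff.mpr (by linarith)
  have hle : ‖(P z t - 1) / (P z t + 1)‖ ≤ k := by
    rw [habs]
    calc Real.exp (-(2 * t)) * ‖a + 1‖ ≤ 1 * k := by
          apply mul_le_mul hexp1 hak (norm_nonneg _) (by norm_num)
      _ = k := one_mul k
  refine ⟨?_, ?_, hle, ?_⟩
  · rw [hb]; exact mul_ne_zero hz0 hd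
  · exact habs
  · -- Re P > 0
    have hlt : ‖P z t - 1‖ < ‖P z t + 1‖ := by
      have h1 : ‖(P z t - 1) / (P z t + 1)‖ < 1 := lt_of_le_of_lt hle hk1
      rw [norm_div, div_lt_one (norm_pos_iff.mpr hP1ne)] at h1
      exact h1
    have h2 : ‖P z t - 1‖ ^ 2 < ‖P z t + 1‖ ^ 2 := by
      exact pow_lt_pow_left₀ hlt (norm_nonneg _) two_ne_zero
    rw [Complex.sq_norm, Complex.sq_norm] at h2
    simp only [Complex.normSq_apply, Complex.sub_re, Complex.add_re, Complex.sub_im,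
      Complex.add_im, Complex.one_re, Complex.one_im] at h2
    nlinarith
end

section
/- Let w be analytic on the closed unit disc neighborhood (i.e., on D) with w(0)=0 and |w'(z)| ≤ k for all z ∈ D, where k ∈ (0,1). Define G : ℂ → ℂ by G(ζ) = ζ + w(1/ζ) for |ζ| > 1 and G(ζ) = ζ + w(conj(ζ)) for |ζ| ≤ 1 (using the continuous extension of w to the closed disc). Then G is continuous on ℂ and injective on ℂ; in particular g(ζ) = ζ + w(1/ζ) is univalent on D* = {ζ : |ζ| > 1}. -/
open Complex Metric Set Filter Topology

lemma aux_mixed (z1 z2 : ℂ) (h1 : 1 < ‖z1‖) (h2 : ‖z2‖ ≤ 1) :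
    ‖1/z1 - (starRingEnd ℂ) z2‖ ≤ ‖z1 - z2‖ := by
  have hz1 : z1 ≠ 0 := by
    intro h; rw [h] at h1; norm_num at h1
  have hA : (0:ℝ) < ‖z1‖ := by linarith
  have hB : (0:ℝ) ≤ ‖z2‖ := norm_nonneg _
  set A := ‖z1‖ with hAdef
  set B := ‖z2‖ with hBdef
  have hc : (z1 * (starRingEnd ℂ) z2).re ≤ A * B := by
    calc (z1 * (starRingEnd ℂ) z2).re ≤ ‖z1 * (starRingEnd ℂ) z2‖ :=
          Complex.re_le_norm _
      _ = A * B := by rw [norm_mul, Complex.norm_conj]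
  have hsq : ‖1 - z1 * (starRingEnd ℂ) z2‖ ^ 2 ≤ (A * ‖z1 - z2‖) ^ 2 := by
    rw [Complex.sq_norm, mul_pow, Complex.sq_norm (z1 - z2)]
    have hA2 : Complex.normSq z1 = A ^ 2 := by rw [← Complex.sq_norm]
    have hB2 : Complex.normSq z2 = B ^ 2 := by rw [← Complex.sq_norm]
    have e1 : Complex.normSq (1 - z1 * (starRingEnd ℂ) z2)
        = 1 + Complex.normSq z1 * Complex.normSq z2 - 2 * (z1 * (starRingEnd ℂ) z2).re := by
      rw [Complex.normSq_sub]
      simp [Complex.normSq_mul, Complex.normSq_conj]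
    have e2 : Complex.normSq (z1 - z2)
        = Complex.normSq z1 + Complex.normSq z2 - 2 * (z1 * (starRingEnd ℂ) z2).re :=
      Complex.normSq_sub z1 z2
    set c := (z1 * (starRingEnd ℂ) z2).re
    rw [e1, e2, hA2, hB2]
    have hc2 : (0:ℝ) ≤ A^2 + 1 - 2*c := by nlinarith [sq_nonneg (A - 1)]
    nlinarith [mul_nonneg (by nlinarith : (0:ℝ) ≤ A^2 - 1) hc2]
  have h3 : ‖1 - z1 * (starRingEnd ℂ) z2‖ ≤ A * ‖z1 - z2‖ :=
    (pow_le_pow_iff_left₀ (norm_nonneg _)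
      (mul_nonneg hA.le (norm_nonneg _)) two_ne_zero).mp hsq
  have hid : 1/z1 - (starRingEnd ℂ) z2 = (1 - z1 * (starRingEnd ℂ) z2) / z1 := by
    field_simp
  rw [hid, norm_div, div_le_iff₀ hA]
  calc ‖1 - z1 * (starRingEnd ℂ) z2‖ ≤ A * ‖z1 - z2‖ := h3
    _ = ‖z1 - z2‖ * A := mul_comm _ _

theorem stmt14 (w : ℂ → ℂ) (k : ℝ) (hk : 0 < k ∧ k < 1)
    (hw : AnalyticOn ℂ w (ball 0 1)) (hw0 : w 0 = 0)
    (hwc : ContinuousOn w (closedBall 0 1))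
    (hw' : ∀ z ∈ ball (0:ℂ) 1, ‖deriv w z‖ ≤ k)
    (G : ℂ → ℂ)
    (hGdef : ∀ ζ : ℂ, G ζ = if 1 < ‖ζ‖ then ζ + w (1 / ζ)
      else ζ + w (starRingEnd ℂ ζ)) :
    Continuous G ∧ Function.Injective G ∧
    Set.InjOn (fun ζ : ℂ => ζ + w (1 / ζ)) {ζ : ℂ | 1 < ‖ζ‖} := by
  obtain ⟨hk0, hk1⟩ := hk
  -- Lipschitz bound on the open ball
  have hball : ∀ x ∈ ball (0:ℂ) 1, ∀ y ∈ ball (0:ℂ) 1,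
      ‖w x - w y‖ ≤ k * ‖x - y‖ := by
    intro x hx y hy
    have hdiff : ∀ z ∈ ball (0:ℂ) 1, DifferentiableAt ℂ w z := fun z hz =>
      ((hw z hz).differentiableWithinAt).differentiableAt
      (by rw [insert_eq_of_mem hz]; exact isOpen_ball.mem_nhds hz)
    have := (convex_ball (0:ℂ) 1).norm_image_sub_le_of_norm_deriv_le hdiff
      (fun z hz => hw' z hz) hy hx
    simpa using this
  -- extension to the closed ball
  have hlip : ∀ x ∈ closedBall (0:ℂ) 1, ∀ y ∈ closedBall (0:ℂ) 1,
      ‖w x - w y‖ ≤ k * ‖x - y‖ := by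
    intro x hx y hy
    have hmem : ∀ t : ℝ, t ∈ Ioo (0:ℝ) 1 → ∀ z ∈ closedBall (0:ℂ) 1,
        (t:ℂ) * z ∈ ball (0:ℂ) 1 := by
      intro t ht z hz
      rw [mem_ball_zero_iff]
      have hz1 : ‖z‖ ≤ 1 := by simpa using mem_closedBall_zero_iff.mp hz
      have : ‖(t:ℂ) * z‖ = |t| * ‖z‖ := by
        simp [norm_mul]
      rw [this, abs_of_pos ht.1]
      calc t * ‖z‖ ≤ t * 1 := by nlinarith [ht.1.le]
        _ < 1 := by linarith [ht.2]
    have hev : ∀ᶠ t : ℝ in 𝓝[<] 1, t ∈ Ioo (0:ℝ) 1 := by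
      filter_upwards [eventually_nhdsWithin_of_eventually_nhds
        (eventually_gt_nhds (by norm_num : (0:ℝ) < 1)), self_mem_nhdsWithin] with t h1 h2
      exact ⟨h1, h2⟩
    have htend : ∀ z ∈ closedBall (0:ℂ) 1,
        Tendsto (fun t : ℝ => w ((t:ℂ) * z)) (𝓝[<] 1) (𝓝 (w z)) := by
      intro z hz
      apply (hwc z hz).tendsto.comp
      rw [tendsto_nhdsWithin_iff]
      constructor
      · have hcont : Continuous fun t : ℝ => (t:ℂ) * z :=
          Complex.continuous_ofReal.mul continuous_const
        have := (hcont.tendsto 1).mono_left (nhdsWithin_le_nhds (s := Iio (1:ℝ)))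
        simpa using this
      · filter_upwards [hev] with t ht
        exact ball_subset_closedBall (hmem t ht z hz)
    have h1 : Tendsto (fun t : ℝ => ‖w ((t:ℂ)*x) - w ((t:ℂ)*y)‖) (𝓝[<] 1)
        (𝓝 (‖w x - w y‖)) :=
      (continuous_norm.tendsto _).comp ((htend x hx).sub (htend y hy))
    have h2 : Tendsto (fun t : ℝ => k * ‖(t:ℂ)*x - (t:ℂ)*y‖) (𝓝[<] 1)
        (𝓝 (k * ‖x - y‖)) := by
      have : Tendsto (fun t : ℝ => (t:ℂ)*x - (t:ℂ)*y) (𝓝[<] 1) (𝓝 (x - y)) := by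
        have hc : Continuous fun t : ℝ => (t:ℂ)*x - (t:ℂ)*y :=
          ((Complex.continuous_ofReal.mul continuous_const).sub
            (Complex.continuous_ofReal.mul continuous_const))
        have := (hc.tendsto 1).mono_left (nhdsWithin_le_nhds (s := Iio (1:ℝ)))
        simpa using this
      exact ((continuous_norm.tendsto _).comp this).const_mul k
    refine le_of_tendsto_of_tendsto h1 h2 ?_
    filter_upwards [hev] with t ht
    exact hball _ (hmem t ht x hx) _ (hmem t ht y hy)
  -- the auxiliary map a
  set A : ℂ → ℂ := fun ζ => if 1 < ‖ζ‖ then 1/ζ else (starRingEnd ℂ) ζ with hAdef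
  have hGA : ∀ ζ, G ζ = ζ + w (A ζ) := by
    intro ζ
    rw [hGdef, hAdef]
    by_cases h : 1 < ‖ζ‖ <;> simp [h]
  have hAmem : ∀ ζ, A ζ ∈ closedBall (0:ℂ) 1 := by
    intro ζ
    rw [mem_closedBall_zero_iff]
    by_cases h : 1 < ‖ζ‖
    · simp only [hAdef, if_pos h, norm_div, norm_one]
      rw [div_le_one (by linarith)]
      linarith
    · simp only [hAdef, if_neg h, Complex.norm_conj]
      linarith [not_lt.mp h]
  have hAlip : ∀ ζ1 ζ2, ‖A ζ1 - A ζ2‖ ≤ ‖ζ1 - ζ2‖ := by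
    intro ζ1 ζ2
    by_cases h1 : 1 < ‖ζ1‖ <;> by_cases h2 : 1 < ‖ζ2‖
    · simp only [hAdef, if_pos h1, if_pos h2]
      have hz1 : ζ1 ≠ 0 := by intro h; rw [h] at h1; norm_num at h1
      have hz2 : ζ2 ≠ 0 := by intro h; rw [h] at h2; norm_num at h2
      have hid : 1/ζ1 - 1/ζ2 = (1*ζ2 - ζ1*1) / (ζ1 * ζ2) := div_sub_div 1 1 hz1 hz2
      rw [hid, norm_div, norm_mul, one_mul, mul_one]
      rw [div_le_iff₀ (by positivity)]
      rw [← norm_neg (ζ2 - ζ1), neg_sub]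
      have hp : 1 ≤ ‖ζ1‖ * ‖ζ2‖ := by nlinarith
      exact le_mul_of_one_le_right (norm_nonneg _) hp
    · simp only [hAdef, if_pos h1, if_neg h2]
      exact aux_mixed ζ1 ζ2 h1 (not_lt.mp h2)
    · simp only [hAdef, if_neg h1, if_pos h2]
      rw [← norm_neg, neg_sub, ← norm_neg (ζ1 - ζ2), neg_sub]
      exact aux_mixed ζ2 ζ1 h2 (not_lt.mp h1)
    · simp only [hAdef, if_neg h1, if_neg h2, ← map_sub, Complex.norm_conj]
      exact le_rfl
  -- key lower bound
  have key : ∀ ζ1 ζ2, (1 - k) * ‖ζ1 - ζ2‖ ≤ ‖G ζ1 - G ζ2‖ := by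
    intro ζ1 ζ2
    have hG : G ζ1 - G ζ2 = (ζ1 - ζ2) + (w (A ζ1) - w (A ζ2)) := by
      rw [hGA, hGA]; ring
    have h1 : ‖ζ1 - ζ2‖ - ‖w (A ζ1) - w (A ζ2)‖
        ≤ ‖G ζ1 - G ζ2‖ := by
      rw [hG]
      have h := norm_sub_norm_le (ζ1 - ζ2) ((ζ1 - ζ2) + (w (A ζ1) - w (A ζ2)))
      rw [sub_add_cancel_left, norm_neg] at h
      linarith
    have h2 : ‖w (A ζ1) - w (A ζ2)‖ ≤ k * ‖ζ1 - ζ2‖ :=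
      le_trans (hlip _ (hAmem ζ1) _ (hAmem ζ2))
        (by nlinarith [hAlip ζ1 ζ2, norm_nonneg (A ζ1 - A ζ2)])
    nlinarith [h1, h2]
  -- upper bound for continuity
  have keyU : ∀ ζ1 ζ2, ‖G ζ1 - G ζ2‖ ≤ (1 + k) * ‖ζ1 - ζ2‖ := by
    intro ζ1 ζ2
    have hG : G ζ1 - G ζ2 = (ζ1 - ζ2) + (w (A ζ1) - w (A ζ2)) := by
      rw [hGA, hGA]; ring
    rw [hG]
    have h2 : ‖w (A ζ1) - w (A ζ2)‖ ≤ k * ‖ζ1 - ζ2‖ :=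
      le_trans (hlip _ (hAmem ζ1) _ (hAmem ζ2))
        (by nlinarith [hAlip ζ1 ζ2, norm_nonneg (A ζ1 - A ζ2)])
    calc ‖(ζ1 - ζ2) + (w (A ζ1) - w (A ζ2))‖
        ≤ ‖ζ1 - ζ2‖ + ‖w (A ζ1) - w (A ζ2)‖ := norm_add_le _ _
      _ ≤ (1 + k) * ‖ζ1 - ζ2‖ := by nlinarith
  have hinj : Function.Injective G := by
    intro ζ1 ζ2 h
    have := key ζ1 ζ2
    rw [h, sub_self, norm_zero] at this
    have h0 : ‖ζ1 - ζ2‖ ≤ 0 := by nlinarith [norm_nonneg (ζ1 - ζ2)]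
    have := le_antisymm h0 (norm_nonneg _)
    rwa [norm_eq_zero, sub_eq_zero] at this
  refine ⟨?_, hinj, ?_⟩
  · have : LipschitzWith ⟨1 + k, by positivity⟩ G := by
      apply LipschitzWith.of_dist_le_mul
      intro x y
      rw [Complex.dist_eq, Complex.dist_eq]
      exact keyU x y
    exact this.continuous
  · intro ζ1 h1 ζ2 h2 h
    simp only [mem_setOf_eq] at h1 h2
    apply hinj
    rw [hGdef, hGdef, if_pos h1, if_pos h2]
    exact h
end
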